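/- arXiv:2509.19306 — 2 statements merged into one kernel-verified Lean document; each statement's English description precedes it below -/
import Mathlib

section
/- Let S, I, N, W > 0 be real constants. The function f(δ) = W·δ·log₂(1 + S/(I + W·N·δ)) is strictly increasing in δ on (0, ∞). Equivalently, its derivative (W/ln 2)·[ln(1 + S/(I + W·N·δ)) − S·W·N·δ / ((S + I + W·N·δ)(I + W·N·δ))] is strictly positive for all δ > 0. -/
lemma aux_log_lb (t : ℝ) (ht : 0 < t) : t / (1 + t) < Real.log (1 + t) := by
  have h1 : (0:ℝ) < 1 + t := by linarith
  have hne : (1 + t)⁻¹ ≠ 1 := by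
    intro h
    have : (1:ℝ) + t = 1 := by field_simp at h; linarith
    linarith
  have h2 := Real.log_lt_sub_one_of_pos (x := (1+t)⁻¹) (by positivity) hne
  rw [Real.log_inv] at h2
  have h3 : (1+t)⁻¹ - 1 = -(t/(1+t)) := by field_simp; ring
  linarith [h3 ▸ h2]

lemma pos_expr (S I N W : ℝ) (hS : 0 < S) (hI : 0 < I) (hN : 0 < N) (hW : 0 < W)
    (δ : ℝ) (hδ : 0 < δ) :
    0 < Real.log (1 + S / (I + W * N * δ)) -
        S * W * N * δ / ((S + I + W * N * δ) * (I + W * N * δ)) := by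
  have hu : 0 < I + W * N * δ := by positivity
  set u : ℝ := I + W * N * δ with hu_def
  have hx : 0 < S / u := by positivity
  have hlog := aux_log_lb (S / u) hx
  have hq : (S / u) / (1 + S / u) = S / (S + u) := by
    rw [eq_div_iff (by positivity)]
    field_simp
    ring
  have hrw : S + I + W * N * δ = S + u := by rw [hu_def]; ring
  rw [hrw]
  have key : S * W * N * δ / ((S + u) * u) < S / (S + u) := by
    rw [div_lt_div_iff₀ (by positivity) (by positivity)]
    have h5 : W * N * δ = u - I := by rw [hu_def]; ring
    nlinarith [mul_pos hS hI, mul_pos (mul_pos hS hI) (show (0:ℝ) < S + u by positivity)]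
  have hSWN : S * W * N * δ = S * (W * N * δ) := by ring
  rw [hq] at hlog
  calc (0:ℝ) < S / (S + u) - S * W * N * δ / ((S + u) * u) := by linarith
    _ ≤ Real.log (1 + S / u) - S * W * N * δ / ((S + u) * u) := by linarith

theorem stmt_1 (S I N W : ℝ) (hS : 0 < S) (hI : 0 < I) (hN : 0 < N) (hW : 0 < W) :
    StrictMonoOn (fun δ : ℝ => W * δ * Real.logb 2 (1 + S / (I + W * N * δ))) (Set.Ioi 0) ∧
    ∀ δ : ℝ, 0 < δ →
      0 < (W / Real.log 2) *
        (Real.log (1 + S / (I + W * N * δ)) -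
          S * W * N * δ / ((S + I + W * N * δ) * (I + W * N * δ))) := by
  have hlog2 : 0 < Real.log 2 := Real.log_pos (by norm_num)
  have hpos : ∀ δ : ℝ, 0 < δ →
      0 < (W / Real.log 2) *
        (Real.log (1 + S / (I + W * N * δ)) -
          S * W * N * δ / ((S + I + W * N * δ) * (I + W * N * δ))) := by
    intro δ hδ
    exact mul_pos (by positivity) (pos_expr S I N W hS hI hN hW δ hδ)
  have hderiv : ∀ δ : ℝ, 0 < δ →
      HasDerivAt (fun δ : ℝ => W * δ * Real.logb 2 (1 + S / (I + W * N * δ)))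
        ((W / Real.log 2) *
          (Real.log (1 + S / (I + W * N * δ)) -
            S * W * N * δ / ((S + I + W * N * δ) * (I + W * N * δ)))) δ := by
    intro δ hδ
    have hu : 0 < I + W * N * δ := by positivity
    have hg : 0 < 1 + S / (I + W * N * δ) := by positivity
    have h1 : HasDerivAt (fun δ : ℝ => I + W * N * δ) (W * N) δ := by
      simpa using ((hasDerivAt_id δ).const_mul (W * N)).const_add I
    have h2 : HasDerivAt (fun δ : ℝ => 1 + S / (I + W * N * δ))
        ((0 * (I + W * N * δ) - S * (W * N)) / (I + W * N * δ)^2) δ :=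
      ((hasDerivAt_const δ S).div h1 hu.ne').const_add 1
    have h3 : HasDerivAt (fun δ : ℝ => Real.log (1 + S / (I + W * N * δ)))
        (((0 * (I + W * N * δ) - S * (W * N)) / (I + W * N * δ)^2) / (1 + S / (I + W * N * δ))) δ :=
      h2.log hg.ne'
    have h4 : HasDerivAt (fun δ : ℝ => W * δ * Real.logb 2 (1 + S / (I + W * N * δ)))
        (W * ((1 : ℝ) * (Real.log (1 + S / (I + W * N * δ)) / Real.log 2) +
          δ * ((((0 * (I + W * N * δ) - S * (W * N)) / (I + W * N * δ)^2) /
            (1 + S / (I + W * N * δ))) / Real.log 2))) δ := by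
      have := ((hasDerivAt_id δ).mul (h3.div_const (Real.log 2))).const_mul W
      simpa [Real.logb, mul_assoc] using this
    convert h4 using 1
    have hsum : (0:ℝ) < S + I + W * N * δ := by positivity
    field_simp
    ring
  refine ⟨?_, hpos⟩
  apply strictMonoOn_of_deriv_pos (convex_Ioi 0)
  · intro x hx
    exact ((hderiv x hx).continuousAt).continuousWithinAt
  · intro x hx
    rw [interior_Ioi] at hx
    rw [(hderiv x hx).deriv]
    exact hpos x hx
end

section
/- Let S, I, N, W, G > 0. The transmission delay E(δ) = G / (W·δ·log₂(1 + S/(I + W·N·δ))) is strictly decreasing in δ on (0, ∞). -/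
lemma aux_mono (S I b : ℝ) (hS : 0 < S) (hI : 0 < I) (hb : 0 < b) :
    StrictMonoOn (fun δ : ℝ => δ * Real.log (1 + S / (I + b * δ))) (Set.Ioi 0) := by
  apply strictMonoOn_of_deriv_pos (convex_Ioi 0)
  · apply ContinuousOn.mul continuousOn_id
    apply ContinuousOn.log
    · exact continuousOn_const.add (continuousOn_const.div
        (continuousOn_const.add (continuousOn_const.mul continuousOn_id))
        (fun x hx => by have : (0:ℝ) < x := hx; positivity))
    · intro x hx
      have hx0 : (0:ℝ) < x := hx
      have : 0 < I + b * x := by positivity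
      have : 0 < 1 + S / (I + b * x) := by positivity
      linarith
  · intro x hx
    rw [interior_Ioi] at hx
    have hx0 : (0:ℝ) < x := hx
    have hden : 0 < I + b * x := by positivity
    have harg : 0 < 1 + S / (I + b * x) := by positivity
    have hd : HasDerivAt (fun δ : ℝ => I + b * δ) b x := by
      exact (((hasDerivAt_id x).const_mul b).const_add I).congr_deriv (mul_one b)
    have h1 : HasDerivAt (fun δ : ℝ => 1 + S / (I + b * δ))
        ((0 * (I + b * x) - S * b) / (I + b * x) ^ 2) x := by
      exact ((hasDerivAt_const x S).div hd hden.ne').const_add 1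
    have h2 : HasDerivAt (fun δ : ℝ => Real.log (1 + S / (I + b * δ)))
        (((0 * (I + b * x) - S * b) / (I + b * x) ^ 2) / (1 + S / (I + b * x))) x :=
      h1.log harg.ne'
    have h3 : HasDerivAt (fun δ : ℝ => δ * Real.log (1 + S / (I + b * δ)))
        (1 * Real.log (1 + S / (I + b * x)) +
          x * (((0 * (I + b * x) - S * b) / (I + b * x) ^ 2) / (1 + S / (I + b * x)))) x :=
      (hasDerivAt_id x).mul h2
    rw [h3.deriv]
    -- log lower bound: log(1+t) > t/(1+t)
    have hlog : S / (I + b * x + S) < Real.log (1 + S / (I + b * x)) := by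
      have hy : (0:ℝ) < 1 / (1 + S / (I + b * x)) := by positivity
      have hne : 1 / (1 + S / (I + b * x)) ≠ 1 := by
        have : 1 < 1 + S / (I + b * x) := by
          have : 0 < S / (I + b * x) := by positivity
          linarith
        intro h
        rw [div_eq_one_iff_eq (by linarith)] at h
        linarith
      have := Real.log_lt_sub_one_of_pos hy hne
      rw [Real.log_div one_ne_zero harg.ne', Real.log_one] at this
      have key : 0 - Real.log (1 + S / (I + b * x)) < 1 / (1 + S / (I + b * x)) - 1 := this
      have heq : 1 - 1 / (1 + S / (I + b * x)) = S / (I + b * x + S) := by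
        rw [one_sub_div harg.ne']
        rw [div_eq_div_iff harg.ne' (by positivity : (I + b * x + S) ≠ 0)]
        field_simp
        ring
      linarith [heq ▸ (by linarith : 1 - 1 / (1 + S / (I + b * x)) < Real.log (1 + S / (I + b * x)))]
    have hterm : x * (((0 * (I + b * x) - S * b) / (I + b * x) ^ 2) / (1 + S / (I + b * x)))
        = -(x * S * b / ((I + b * x) * (I + b * x + S))) := by
      field_simp
      ring
    rw [hterm]
    have hfrac : x * S * b / ((I + b * x) * (I + b * x + S)) < S / (I + b * x + S) := by
      rw [div_lt_div_iff₀ (by positivity) (by positivity)]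
      nlinarith [mul_pos hS hI, mul_pos (mul_pos hS hI) (by positivity : (0:ℝ) < I + b*x+S)]
    linarith

theorem stmt_2 (S I N W G : ℝ) (hS : 0 < S) (hI : 0 < I) (hN : 0 < N) (hW : 0 < W)
    (hG : 0 < G) :
    StrictAntiOn (fun δ : ℝ => G / (W * δ * Real.logb 2 (1 + S / (I + W * N * δ))))
      (Set.Ioi 0) := by
  intro x hx y hy hxy
  have hx0 : (0:ℝ) < x := hx
  have hy0 : (0:ℝ) < y := hy
  have hb : 0 < W * N := by positivity
  have hmono := aux_mono S I (W * N) hS hI hb hx hy hxy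
  have hlog2 : (0:ℝ) < Real.log 2 := Real.log_pos (by norm_num)
  have hgpos : 0 < x * Real.log (1 + S / (I + W * N * x)) := by
    apply mul_pos hx0
    apply Real.log_pos
    have : 0 < S / (I + W * N * x) := by positivity
    linarith
  have key : ∀ z : ℝ, W * z * Real.logb 2 (1 + S / (I + W * N * z))
      = W / Real.log 2 * (z * Real.log (1 + S / (I + W * N * z))) := by
    intro z; rw [Real.logb]; ring
  simp only [key]
  have hc : 0 < W / Real.log 2 := by positivity
  apply div_lt_div_of_pos_left hG (by positivity)
  exact (mul_lt_mul_iff_right₀ hc).2 hmono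
end
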